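/- At a stationary point q* of the annealed problem max_{q∈Δ} ( H(Y_N|Y)(q) + β I(X;Y_N)(q) ), where the Lagrange conditions give the explicit Gibbs form q*_{νk} = exp(β (∇I)_{νk}/p_k) / ∑_μ exp(β (∇I)_{μk}/p_k), the Lagrange multipliers λ_k = p_k (1 − ln ∑_ν exp(β (∇I)_{νk}/p_k)) satisfy d(∑_k λ_k)/dβ (computed treating (∇I)_{νk} as fixed) = −∑_{ν,k} q*_{νk} (∇I)_{νk} = −(q* · ∇I) = −I(q*). -/

import Mathlib

open Real

/-- Marginal of X from the joint distribution P(x,y). -/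
noncomputable def pX {Kx K : ℕ} (P : Fin Kx → Fin K → ℝ) (x : Fin Kx) : ℝ :=
  ∑ k, P x k

/-- Marginal of Y from the joint distribution P(x,y). -/
noncomputable def pY {Kx K : ℕ} (P : Fin Kx → Fin K → ℝ) (k : Fin K) : ℝ :=
  ∑ x, P x k

/-- Joint distribution of (X, Y_N) induced by the quantizer q. -/
noncomputable def pXN {Kx K N : ℕ} (P : Fin Kx → Fin K → ℝ)
    (q : Fin N → Fin K → ℝ) (x : Fin Kx) (ν : Fin N) : ℝ :=
  ∑ k, P x k * q ν k

/-- Marginal of Y_N induced by the quantizer q and a distribution p on Y. -/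
noncomputable def pN {K N : ℕ} (p : Fin K → ℝ) (q : Fin N → Fin K → ℝ) (ν : Fin N) : ℝ :=
  ∑ k, p k * q ν k

/-- Conditional entropy H(Y_N|Y). -/
noncomputable def Hcond {K N : ℕ} (p : Fin K → ℝ) (q : Fin N → Fin K → ℝ) : ℝ :=
  -∑ k, p k * ∑ ν, q ν k * Real.log (q ν k)

/-- Mutual information I(Y;Y_N) induced by the quantizer q. -/
noncomputable def IYN {K N : ℕ} (p : Fin K → ℝ) (q : Fin N → Fin K → ℝ) : ℝ :=
  ∑ ν, ∑ k, q ν k * p k * Real.log (q ν k / pN p q ν)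

/-- Mutual information I(X;Y_N) induced by the quantizer q through X → Y → Y_N. -/
noncomputable def IXN {Kx K N : ℕ} (P : Fin Kx → Fin K → ℝ)
    (q : Fin N → Fin K → ℝ) : ℝ :=
  ∑ x, ∑ ν, pXN P q x ν * Real.log (pXN P q x ν / (pX P x * pN (pY P) q ν))

/-- Mutual information I(X;Y). -/
noncomputable def IXY {Kx K : ℕ} (P : Fin Kx → Fin K → ℝ) : ℝ :=
  ∑ x, ∑ k, P x k * Real.log (P x k / (pX P x * pY P k))

/-- The set Δ of stochastic quantizers. -/
def Δset (N K : ℕ) : Set (Fin N → Fin K → ℝ) :=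
  {q | (∀ ν k, 0 ≤ q ν k) ∧ ∀ k, ∑ ν, q ν k = 1}

/-- The (ambient-coordinate) gradient of I(X;Y_N): ∂I/∂q_{νk} = ∑_x p(x,y_k) ln(p(x|ν)/p(x)). -/
noncomputable def gradI {Kx K N : ℕ} (P : Fin Kx → Fin K → ℝ)
    (q : Fin N → Fin K → ℝ) (ν : Fin N) (k : Fin K) : ℝ :=
  ∑ x, P x k * Real.log ((pXN P q x ν / pN (pY P) q ν) / pX P x)

theorem stmt11 {K N : ℕ} (hN : 0 < N) (p : Fin K → ℝ) (hp : ∀ k, 0 < p k)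
    (g : Fin N → Fin K → ℝ) (β Ival : ℝ) (qs : Fin N → Fin K → ℝ)
    (hGibbs : ∀ ν k, qs ν k =
      Real.exp (β * g ν k / p k) / ∑ μ, Real.exp (β * g μ k / p k))
    (hEuler : ∑ ν, ∑ k, qs ν k * g ν k = Ival) :
    HasDerivAt (fun b => ∑ k, p k * (1 - Real.log (∑ ν, Real.exp (b * g ν k / p k))))
      (-Ival) β := by
  have hS : ∀ k, 0 < ∑ ν : Fin N, Real.exp (β * g ν k / p k) := by
    intro k
    apply Finset.sum_pos (fun ν _ => Real.exp_pos _)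
    exact Finset.univ_nonempty_iff.mpr ⟨⟨0, hN⟩⟩
  have key : ∀ k, HasDerivAt
      (fun b => p k * (1 - Real.log (∑ ν, Real.exp (b * g ν k / p k))))
      (-(∑ ν, qs ν k * g ν k)) β := by
    intro k
    have hterm : ∀ ν : Fin N, HasDerivAt (fun b => Real.exp (b * g ν k / p k))
        (Real.exp (β * g ν k / p k) * (g ν k / p k)) β := by
      intro ν
      have h1 : HasDerivAt (fun b : ℝ => b * g ν k / p k) (g ν k / p k) β := by
        simpa using ((hasDerivAt_id β).mul_const (g ν k)).div_const (p k)
      exact (Real.hasDerivAt_exp _).comp β h1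
    have hSum : HasDerivAt (fun b => ∑ ν, Real.exp (b * g ν k / p k))
        (∑ ν, Real.exp (β * g ν k / p k) * (g ν k / p k)) β :=
      HasDerivAt.fun_sum (fun ν _ => hterm ν)
    have hlog := hSum.log (ne_of_gt (hS k))
    have := ((hlog.const_sub 1).const_mul (p k))
    convert this using 1
    case e'_4 => rfl
    case e'_5 => rfl
    have hSne := ne_of_gt (hS k)
    have hpk := (hp k).ne'
    rw [← neg_neg (p k * -_)]
    congr 1
    rw [Finset.sum_congr rfl (fun ν _ => by rw [hGibbs ν k])]
    field_simp
    rw [Finset.mul_sum, Finset.mul_sum]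
    exact Finset.sum_congr rfl (fun ν _ => by field_simp)
  have hTotal : HasDerivAt
      (fun b => ∑ k, p k * (1 - Real.log (∑ ν, Real.exp (b * g ν k / p k))))
      (∑ k, -(∑ ν, qs ν k * g ν k)) β :=
    HasDerivAt.fun_sum (fun k _ => key k)
  have : (∑ k, -(∑ ν, qs ν k * g ν k)) = -Ival := by
    rw [← hEuler, Finset.sum_comm, ← Finset.sum_neg_distrib]
  rwa [this] at hTotal
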